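/- Let Γ be a strongly connected k-regular digraph and let F = [A,B] be an edge cut given by a partition V = A ∪ B, with F the set of edges from A to B, and suppose |F| ≤ k. If r = max over x ∈ A of the number of out-neighbors of x in A, then r+1 ≤ |A| ≤ k/(k−r) whenever r < k; consequently r ∈ {0, k−1, k}. -/

import Mathlib

open Set

namespace PaperDRD

variable {V : Type*}

def HasWalk (E : V → V → Prop) (u v : V) (n : ℕ) : Prop :=
  ∃ f : Fin (n + 1) → V, f 0 = u ∧ f (Fin.last n) = v ∧
    ∀ i : Fin n, E (f i.castSucc) (f i.succ)

def StronglyConnected (E : V → V → Prop) : Prop :=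
  ∀ u v : V, ∃ n : ℕ, HasWalk E u v n

noncomputable def ddist (E : V → V → Prop) (u v : V) : ℕ :=
  sInf {n : ℕ | HasWalk E u v n}

noncomputable def girth (E : V → V → Prop) : ℕ :=
  sInf {n : ℕ | 0 < n ∧ ∃ u : V, HasWalk E u u n}

noncomputable def diam [Fintype V] (E : V → V → Prop) : ℕ :=
  Finset.univ.sup fun p : V × V => ddist E p.1 p.2

noncomputable def outDeg (E : V → V → Prop) (x : V) : ℕ := {y : V | E x y}.ncard

noncomputable def inDeg (E : V → V → Prop) (x : V) : ℕ := {y : V | E y x}.ncard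

def IsRegular (E : V → V → Prop) (k : ℕ) : Prop :=
  ∀ x : V, outDeg E x = k ∧ inDeg E x = k

def DelEdges (E : V → V → Prop) (F : Set (V × V)) : V → V → Prop :=
  fun a b => E a b ∧ (a, b) ∉ F

def IsEdgeCut (E : V → V → Prop) (F : Set (V × V)) : Prop :=
  (∀ e ∈ F, E e.1 e.2) ∧ ¬ StronglyConnected (DelEdges E F)

noncomputable def edgeConnectivity (E : V → V → Prop) : ℕ :=
  sInf {n : ℕ | ∃ F : Set (V × V), IsEdgeCut E F ∧ F.ncard = n}

def IsMinEdgeCut (E : V → V → Prop) (F : Set (V × V)) : Prop :=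
  IsEdgeCut E F ∧ F.ncard = edgeConnectivity E

def outStar (E : V → V → Prop) (x : V) : Set (V × V) := {e : V × V | e.1 = x ∧ E x e.2}

def inStar (E : V → V → Prop) (x : V) : Set (V × V) := {e : V × V | e.2 = x ∧ E e.1 x}

def IsDRDigraph (E : V → V → Prop) (k : ℕ) : Prop :=
  Irreflexive E ∧ IsRegular E k ∧ StronglyConnected E ∧
    ∀ (i m : ℕ) (u v u' v' : V), 1 ≤ m → ddist E u v = m → ddist E u' v' = m →
      {w : V | ddist E u w = i ∧ E v w}.ncard = {w : V | ddist E u' w = i ∧ E v' w}.ncard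

def IsSRDigraph (E : V → V → Prop) (n k t lam mu : ℕ) : Prop :=
  Irreflexive E ∧ Nat.card V = n ∧ IsRegular E k ∧ StronglyConnected E ∧
    (∀ u : V, {w : V | E u w ∧ E w u}.ncard = t) ∧
    (∀ u v : V, u ≠ v → E u v → {w : V | E u w ∧ E w v}.ncard = lam) ∧
    (∀ u v : V, u ≠ v → ¬ E u v → {w : V | E u w ∧ E w v}.ncard = mu)

def IsUndirectedCycleN (E : V → V → Prop) (n : ℕ) : Prop :=
  ∃ e : V ≃ ZMod n, ∀ a b : V, E a b ↔ (e b = e a + 1 ∨ e a = e b + 1)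

def IsUndirectedCycle (E : V → V → Prop) : Prop :=
  ∃ n : ℕ, 3 ≤ n ∧ IsUndirectedCycleN E n

theorem stmt6 [Fintype V] (E : V → V → Prop) (k : ℕ)
    (hirr : Irreflexive E) (hreg : IsRegular E k) (hsc : StronglyConnected E)
    (A B : Set V) (hA : A.Nonempty) (hB : B.Nonempty)
    (hdisj : Disjoint A B) (hcover : A ∪ B = Set.univ)
    (hF : {e : V × V | E e.1 e.2 ∧ e.1 ∈ A ∧ e.2 ∈ B}.ncard ≤ k)
    (r : ℕ)
    (hr1 : ∀ x ∈ A, {y : V | E x y ∧ y ∈ A}.ncard ≤ r)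
    (hr2 : ∃ x ∈ A, {y : V | E x y ∧ y ∈ A}.ncard = r) :
    (r < k → r + 1 ≤ A.ncard ∧ A.ncard ≤ k / (k - r)) ∧
      (r = 0 ∨ r = k - 1 ∨ r = k) := by
  classical
  -- degrees split
  have hab : ∀ x : V, {y : V | E x y ∧ y ∈ A}.ncard + {y : V | E x y ∧ y ∈ B}.ncard = k := by
    intro x
    have hk := (hreg x).1
    rw [outDeg] at hk
    have hsplit : {y : V | E x y} = {y : V | E x y ∧ y ∈ A} ∪ {y : V | E x y ∧ y ∈ B} := by
      ext y
      simp only [Set.mem_setOf_eq, Set.mem_union]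
      constructor
      · intro h
        have hy : y ∈ A ∪ B := by rw [hcover]; trivial
        rcases hy with hy | hy
        · exact Or.inl ⟨h, hy⟩
        · exact Or.inr ⟨h, hy⟩
      · rintro (⟨h, _⟩ | ⟨h, _⟩) <;> exact h
    have hdis : Disjoint {y : V | E x y ∧ y ∈ A} {y : V | E x y ∧ y ∈ B} := by
      rw [Set.disjoint_left]
      rintro y ⟨_, hyA⟩ ⟨_, hyB⟩
      exact (Set.disjoint_left.mp hdisj hyA) hyB
    rw [hsplit, Set.ncard_union_eq hdis (Set.toFinite _) (Set.toFinite _)] at hk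
    exact hk
  -- r ≤ k
  obtain ⟨x0, hx0A, hx0⟩ := hr2
  have hrk : r ≤ k := by
    have := hab x0
    omega
  -- r + 1 ≤ |A|
  have hge : r + 1 ≤ A.ncard := by
    have hxnot : x0 ∉ {y : V | E x0 y ∧ y ∈ A} := by
      intro h
      exact hirr x0 h.1
    have hsub : insert x0 {y : V | E x0 y ∧ y ∈ A} ⊆ A := by
      rintro y (rfl | ⟨_, hyA⟩)
      · exact hx0A
      · exact hyA
    have h1 : (insert x0 {y : V | E x0 y ∧ y ∈ A}).ncard = r + 1 := by
      rw [Set.ncard_insert_of_notMem hxnot (Set.toFinite _), hx0]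
    calc r + 1 = (insert x0 {y : V | E x0 y ∧ y ∈ A}).ncard := h1.symm
      _ ≤ A.ncard := Set.ncard_le_ncard hsub (Set.toFinite _)
  -- |F| = sum over x in A of edges to B
  set F : Set (V × V) := {e : V × V | E e.1 e.2 ∧ e.1 ∈ A ∧ e.2 ∈ B} with hFdef
  have hFsum : F.ncard = ∑ x ∈ A.toFinset, {y : V | E x y ∧ y ∈ B}.ncard := by
    rw [Set.ncard_eq_toFinset_card']
    rw [Finset.card_eq_sum_card_fiberwise (f := Prod.fst) (t := A.toFinset)
      (by intro e he; simp only [Finset.mem_coe, Set.mem_toFinset] at *; exact he.2.1)]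
    refine Finset.sum_congr rfl ?_
    intro x hx
    rw [Set.mem_toFinset] at hx
    have himg : F.toFinset.filter (fun e => e.1 = x)
        = ({y : V | E x y ∧ y ∈ B}.toFinset).image (Prod.mk x) := by
      ext ⟨a, b⟩
      simp only [Finset.mem_filter, Set.mem_toFinset, Finset.mem_image, hFdef,
        Set.mem_setOf_eq, Prod.mk.injEq]
      constructor
      · rintro ⟨⟨hE, _, hbB⟩, rfl⟩
        exact ⟨b, ⟨hE, hbB⟩, rfl, rfl⟩
      · rintro ⟨y, ⟨hE, hyB⟩, rfl, rfl⟩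
        exact ⟨⟨hE, hx, hyB⟩, rfl⟩
    rw [himg, Finset.card_image_of_injective _ (fun y z h => by
      simpa using congrArg Prod.snd h), Set.ncard_eq_toFinset_card']
  -- (k - r) * |A| ≤ k
  have hmain : (k - r) * A.ncard ≤ k := by
    have hlow : ∀ x ∈ A.toFinset, k - r ≤ {y : V | E x y ∧ y ∈ B}.ncard := by
      intro x hx
      rw [Set.mem_toFinset] at hx
      have h1 := hab x
      have h2 := hr1 x hx
      omega
    calc (k - r) * A.ncard = ∑ _x ∈ A.toFinset, (k - r) := by
          rw [Finset.sum_const, smul_eq_mul, Set.ncard_eq_toFinset_card', mul_comm]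
      _ ≤ ∑ x ∈ A.toFinset, {y : V | E x y ∧ y ∈ B}.ncard := Finset.sum_le_sum hlow
      _ = F.ncard := hFsum.symm
      _ ≤ k := hF
  constructor
  · intro hrlt
    refine ⟨hge, ?_⟩
    rw [Nat.le_div_iff_mul_le (by omega)]
    calc A.ncard * (k - r) = (k - r) * A.ncard := mul_comm _ _
      _ ≤ k := hmain
  · rcases eq_or_lt_of_le hrk with heq | hlt
    · exact Or.inr (Or.inr heq)
    · -- r < k : (k - r) * (r + 1) ≤ k forces r = 0 or r = k - 1
      have h1 : (k - r) * (r + 1) ≤ k :=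
        le_trans (Nat.mul_le_mul_left _ hge) hmain
      rcases Nat.eq_zero_or_pos r with h0 | hpos
      · exact Or.inl h0
      · refine Or.inr (Or.inl ?_)
        obtain ⟨d, hd⟩ : ∃ d, k = r + d := ⟨k - r, by omega⟩
        subst hd
        have hdr : r + d - r = d := by omega
        rw [hdr] at h1
        by_contra hne
        have h2 : 2 ≤ d := by omega
        have h3 : 2 * r ≤ d * r := Nat.mul_le_mul_right r h2
        have h4 : d * (r + 1) = d * r + d := by ring
        omega

end PaperDRD
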